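/- Fix an integer h ≥ 1, and suppose p_h(t) = t^{4h} − t^{4h−1} + t^{2h} − t + 1 is a product of cyclotomic polynomials. Then there exist an integer k ≥ 0 and positive integers n_1, …, n_k, each of which is a multiple of 4 and is not a power of 2, such that p_h(t) = Φ_10(t) · ∏_{j=1}^{k} Φ_{n_j}(t) in ℤ[t]. -/

import Mathlib

open Polynomial

private lemma cyclo4 : cyclotomic 4 ℤ = X^2 + 1 := by
  have h := prod_cyclotomic_eq_X_pow_sub_one (by norm_num : 0 < 4) ℤ
  have hd : (4:ℕ).divisors = {1,2,4} := by decide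
  rw [hd, Finset.prod_insert (by decide), Finset.prod_insert (by decide),
    Finset.prod_singleton, cyclotomic_one, cyclotomic_two] at h
  have hA : ((X - 1) * (X + 1) : ℤ[X]) ≠ 0 := fun hc => by
    have := congrArg (eval 2) hc; simp at this
  apply mul_left_cancel₀ hA
  rw [show ((X-1) * (X+1) * (cyclotomic 4 ℤ) : ℤ[X]) = (X-1)*((X+1)*cyclotomic 4 ℤ) by ring, h]
  ring

private lemma cyclo6 : cyclotomic 6 ℤ = X^2 - X + 1 := by
  haveI : Fact (Nat.Prime 3) := ⟨by norm_num⟩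
  have h := prod_cyclotomic_eq_X_pow_sub_one (by norm_num : 0 < 6) ℤ
  have hd : (6:ℕ).divisors = {1,2,3,6} := by decide
  rw [hd, Finset.prod_insert (by decide), Finset.prod_insert (by decide),
    Finset.prod_insert (by decide), Finset.prod_singleton,
    cyclotomic_one, cyclotomic_two, cyclotomic_prime] at h
  have hp3 : (∑ i ∈ Finset.range 3, (X:ℤ[X])^i) = X^2 + X + 1 := by
    simp [Finset.sum_range_succ]; ring
  rw [hp3] at h
  have hA : ((X - 1) * ((X + 1) * (X^2 + X + 1)) : ℤ[X]) ≠ 0 := fun hc => by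
    have := congrArg (eval 2) hc; simp at this
  apply mul_left_cancel₀ hA
  rw [show ((X-1) * ((X+1) * (X^2+X+1)) * (cyclotomic 6 ℤ) : ℤ[X]) =
    (X-1)*((X+1)*((X^2+X+1)*cyclotomic 6 ℤ)) by ring, h]
  ring

private lemma cyclo10 : cyclotomic 10 ℤ = X^4 - X^3 + X^2 - X + 1 := by
  haveI : Fact (Nat.Prime 5) := ⟨by norm_num⟩
  have h := prod_cyclotomic_eq_X_pow_sub_one (by norm_num : 0 < 10) ℤ
  have hd : (10:ℕ).divisors = {1,2,5,10} := by decide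
  rw [hd, Finset.prod_insert (by decide), Finset.prod_insert (by decide),
    Finset.prod_insert (by decide), Finset.prod_singleton,
    cyclotomic_one, cyclotomic_two, cyclotomic_prime] at h
  have hp5 : (∑ i ∈ Finset.range 5, (X:ℤ[X])^i) = X^4 + X^3 + X^2 + X + 1 := by
    simp [Finset.sum_range_succ]; ring
  rw [hp5] at h
  have hA : ((X - 1) * ((X + 1) * (X^4+X^3+X^2+X+1)) : ℤ[X]) ≠ 0 := fun hc => by
    have := congrArg (eval 2) hc; simp at this
  apply mul_left_cancel₀ hA
  rw [show ((X-1) * ((X+1) * (X^4+X^3+X^2+X+1)) * (cyclotomic 10 ℤ) : ℤ[X]) =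
    (X-1)*((X+1)*((X^4+X^3+X^2+X+1)*cyclotomic 10 ℤ)) by ring, h]
  ring

private lemma cyclo12 : cyclotomic 12 ℤ = X^4 - X^2 + 1 := by
  haveI : Fact (Nat.Prime 3) := ⟨by norm_num⟩
  have h := prod_cyclotomic_eq_X_pow_sub_one (by norm_num : 0 < 12) ℤ
  have hd : (12:ℕ).divisors = {1,2,3,4,6,12} := by decide
  rw [hd, Finset.prod_insert (by decide), Finset.prod_insert (by decide),
    Finset.prod_insert (by decide), Finset.prod_insert (by decide),
    Finset.prod_insert (by decide), Finset.prod_singleton,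
    cyclotomic_one, cyclotomic_two, cyclotomic_prime, cyclo4, cyclo6] at h
  have hp3 : (∑ i ∈ Finset.range 3, (X:ℤ[X])^i) = X^2 + X + 1 := by
    simp [Finset.sum_range_succ]; ring
  rw [hp3] at h
  have hA : ((X-1) * ((X+1) * ((X^2+X+1) * ((X^2+1) * (X^2-X+1)))) : ℤ[X]) ≠ 0 := fun hc => by
    have := congrArg (eval 2) hc; simp at this
  apply mul_left_cancel₀ hA
  rw [show ((X-1) * ((X+1) * ((X^2+X+1) * ((X^2+1) * (X^2-X+1)))) * (cyclotomic 12 ℤ) : ℤ[X]) =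
    (X-1)*((X+1)*((X^2+X+1)*((X^2+1)*((X^2-X+1)*cyclotomic 12 ℤ)))) by ring, h]
  ring

private lemma le_twelve (h n : ℕ) (hh : 1 ≤ h) (hn : 0 < n)
    (hdvd : cyclotomic n ℤ ∣ ((X : ℤ[X]) ^ (4 * h) - X ^ (4 * h - 1) + X ^ (2 * h) - X + 1)) :
    n ≤ 12 := by
  set θ : ℝ := 2 * Real.pi / n with hθ
  set ζ : ℂ := Complex.exp (θ * Complex.I) with hζdef
  have hprim : IsPrimitiveRoot ζ n := by
    have := Complex.isPrimitiveRoot_exp n hn.ne'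
    convert this using 2
    push_cast [hθ]
    ring
  -- ζ is a root of the polynomial over ℂ
  have hdvdC : cyclotomic n ℂ ∣
      ((X : ℂ[X]) ^ (4 * h) - X ^ (4 * h - 1) + X ^ (2 * h) - X + 1) := by
    have := Polynomial.map_dvd (Int.castRingHom ℂ) hdvd
    rwa [map_cyclotomic, Polynomial.map_add, Polynomial.map_sub, Polynomial.map_add,
      Polynomial.map_sub, Polynomial.map_pow, Polynomial.map_pow, Polynomial.map_pow,
      Polynomial.map_one, Polynomial.map_X] at this
  have hroot : ζ ^ (4 * h) - ζ ^ (4 * h - 1) + ζ ^ (2 * h) - ζ + 1 = 0 := by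
    obtain ⟨q, hq⟩ := hdvdC
    have h0 : eval ζ (cyclotomic n ℂ) = 0 := hprim.isRoot_cyclotomic hn
    have := congrArg (eval ζ) hq
    simpa [h0] using this
  have habs : ‖ζ‖ = 1 := by
    rw [hζdef]; exact Complex.norm_exp_ofReal_mul_I θ
  have hkey : (ζ - 1) * (ζ ^ (4 * h - 1) - 1) = -ζ ^ (2 * h) := by
    have h4 : ζ ^ (4 * h) = ζ ^ (4 * h - 1) * ζ := by
      rw [← pow_succ]
      congr 1
      omega
    rw [h4] at hroot
    linear_combination hroot
  have habs2 : ‖ζ - 1‖ * ‖ζ ^ (4 * h - 1) - 1‖ = 1 := by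
    have := congrArg (‖·‖) hkey
    rwa [norm_mul, norm_neg, norm_pow, habs, one_pow] at this
  have hub2 : ‖ζ ^ (4 * h - 1) - 1‖ ≤ 2 := by
    calc ‖ζ ^ (4 * h - 1) - 1‖ ≤
        ‖ζ ^ (4 * h - 1)‖ + ‖(1:ℂ)‖ := norm_sub_le _ _
      _ ≤ 2 := by rw [norm_pow, habs, one_pow, norm_one]; norm_num
  have hlb : (1 : ℝ) / 2 ≤ ‖ζ - 1‖ := by
    by_contra hc
    push_neg at hc
    have h1 : ‖ζ - 1‖ * ‖ζ ^ (4 * h - 1) - 1‖ < 1 := by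
      calc ‖ζ - 1‖ * ‖ζ ^ (4 * h - 1) - 1‖
          ≤ ‖ζ - 1‖ * 2 := by
            exact mul_le_mul_of_nonneg_left hub2 (norm_nonneg _)
        _ < 1 := by linarith
    rw [habs2] at h1; exact lt_irrefl _ h1
  -- upper bound ‖ζ - 1‖ ≤ θ
  have hθpos : 0 < θ := by
    rw [hθ]
    positivity
  have hub : ‖ζ - 1‖ ≤ θ := by
    have hz : ζ - 1 = Complex.ofReal (Real.cos θ - 1) + Complex.ofReal (Real.sin θ) * Complex.I := by
      rw [hζdef, Complex.exp_mul_I]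
      push_cast
      ring
    rw [hz, Complex.norm_def, Complex.normSq_add_mul_I]
    have hcos : 1 - θ ^ 2 / 2 ≤ Real.cos θ := Real.one_sub_sq_div_two_le_cos
    have hsq : (Real.cos θ - 1) ^ 2 + Real.sin θ ^ 2 ≤ θ ^ 2 := by
      have hpyth : Real.sin θ ^ 2 + Real.cos θ ^ 2 = 1 := Real.sin_sq_add_cos_sq θ
      have hc1 : Real.cos θ ≤ 1 := Real.cos_le_one θ
      nlinarith [sq_nonneg θ, sq_nonneg (Real.cos θ - 1)]
    calc Real.sqrt ((Real.cos θ - 1) ^ 2 + Real.sin θ ^ 2) ≤ Real.sqrt (θ ^ 2) :=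
        Real.sqrt_le_sqrt hsq
      _ = θ := by rw [Real.sqrt_sq hθpos.le]
  have hfin : (1 : ℝ) / 2 ≤ 2 * Real.pi / n := le_trans hlb hub
  have hpi : Real.pi < 3.15 := Real.pi_lt_d2
  have hncast : (n : ℝ) ≤ 4 * Real.pi := by
    rw [div_le_div_iff₀ (by norm_num) (by exact_mod_cast hn)] at hfin
    linarith
  have : (n : ℝ) < 13 := by linarith
  exact_mod_cast Nat.lt_succ_iff.mp (by exact_mod_cast this : n < 13)

theorem stmt_7 (h : ℕ) (hh : 1 ≤ h)
    (hprod : ∃ S : Multiset ℕ, (∀ n ∈ S, 0 < n) ∧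
      ((X : ℤ[X]) ^ (4 * h) - X ^ (4 * h - 1) + X ^ (2 * h) - X + 1 =
        (S.map (fun n => cyclotomic n ℤ)).prod)) :
    ∃ (k : ℕ) (n : Fin k → ℕ),
      (∀ j, 0 < n j ∧ 4 ∣ n j ∧ ¬ ∃ e : ℕ, n j = 2 ^ e) ∧
      ((X : ℤ[X]) ^ (4 * h) - X ^ (4 * h - 1) + X ^ (2 * h) - X + 1 =
        cyclotomic 10 ℤ * ∏ j, cyclotomic (n j) ℤ) := by
  obtain ⟨S, hSpos, heq⟩ := hprod
  set p : ℤ[X] := (X : ℤ[X]) ^ (4 * h) - X ^ (4 * h - 1) + X ^ (2 * h) - X + 1 with hp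
  have hodd : Odd (4 * h - 1) := ⟨2 * h - 1, by omega⟩
  have heven4 : Even (4 * h) := ⟨2 * h, by omega⟩
  have heven2 : Even (2 * h) := ⟨h, by omega⟩
  have hev1 : eval 1 p = 1 := by simp [hp]
  have hev5 : eval (-1) p = 5 := by
    simp [hp, hodd.neg_one_pow, heven4.neg_one_pow, heven2.neg_one_pow]
  have hdvd : ∀ n ∈ S, cyclotomic n ℤ ∣ p := by
    intro n hn
    rw [heq]
    exact Multiset.dvd_prod (Multiset.mem_map_of_mem _ hn)
  have hd1 : ∀ n ∈ S, eval 1 (cyclotomic n ℤ) ∣ 1 := by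
    intro n hn
    obtain ⟨q, hq⟩ := hdvd n hn
    have h1 := hev1
    rw [hq, eval_mul] at h1
    exact ⟨eval 1 q, h1.symm⟩
  have hd5 : ∀ n ∈ S, eval (-1) (cyclotomic n ℤ) ∣ 5 := by
    intro n hn
    obtain ⟨q, hq⟩ := hdvd n hn
    have h1 := hev5
    rw [hq, eval_mul] at h1
    exact ⟨eval (-1) q, h1.symm⟩
  -- every element of S is 10 or 12
  have hS : ∀ n ∈ S, n = 10 ∨ n = 12 := by
    intro n hn
    haveI : Fact (Nat.Prime 2) := ⟨by norm_num⟩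
    haveI : Fact (Nat.Prime 3) := ⟨by norm_num⟩
    haveI : Fact (Nat.Prime 5) := ⟨by norm_num⟩
    haveI : Fact (Nat.Prime 7) := ⟨by norm_num⟩
    haveI : Fact (Nat.Prime 11) := ⟨by norm_num⟩
    have hub := le_twelve h n hh (hSpos n hn) (hdvd n hn)
    have hlb := hSpos n hn
    have d1 := hd1 n hn
    have d5 := hd5 n hn
    interval_cases n
    · rw [cyclotomic_one] at d1; norm_num at d1
    · rw [cyclotomic_two] at d1; norm_num at d1
    · rw [eval_one_cyclotomic_prime] at d1; norm_num at d1
    · rw [show (4:ℕ) = 2^(1+1) from rfl, eval_one_cyclotomic_prime_pow] at d1; norm_num at d1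
    · rw [eval_one_cyclotomic_prime] at d1; norm_num at d1
    · rw [cyclo6] at d5; norm_num at d5
    · rw [eval_one_cyclotomic_prime] at d1; norm_num at d1
    · rw [show (8:ℕ) = 2^(2+1) from rfl, eval_one_cyclotomic_prime_pow] at d1; norm_num at d1
    · rw [show (9:ℕ) = 3^(1+1) from rfl, eval_one_cyclotomic_prime_pow] at d1; norm_num at d1
    · exact Or.inl rfl
    · rw [eval_one_cyclotomic_prime] at d1; norm_num at d1
    · exact Or.inr rfl
  -- decompose S
  have hSdec : S = Multiset.replicate (S.count 10) 10 + Multiset.replicate (S.count 12) 12 := by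
    ext m
    rw [Multiset.count_add, Multiset.count_replicate, Multiset.count_replicate]
    by_cases h10 : m = 10
    · subst h10; simp
    · by_cases h12 : m = 12
      · subst h12; simp
      · have hm : m ∉ S := fun hc => by rcases hS m hc with rfl | rfl <;> simp_all
        rw [Multiset.count_eq_zero_of_notMem hm, if_neg (fun hc => h10 hc.symm), if_neg (fun hc => h12 hc.symm)]
  set a := S.count 10 with ha
  set b := S.count 12 with hb
  have heq2 : p = cyclotomic 10 ℤ ^ a * cyclotomic 12 ℤ ^ b := by
    rw [heq, hSdec]
    rw [Multiset.map_add, Multiset.prod_add, Multiset.map_replicate, Multiset.map_replicate,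
      Multiset.prod_replicate, Multiset.prod_replicate]
  -- a = 1
  have ha1 : a = 1 := by
    have h5 := hev5
    rw [heq2, eval_mul, eval_pow, eval_pow, cyclo10, cyclo12] at h5
    norm_num at h5
    -- h5 : 5 ^ a = 5  (hopefully)
    rcases a with _ | _ | a
    · norm_num at h5
    · rfl
    · exfalso
      have : (5:ℤ) ^ (a + 1 + 1) = 25 * 5 ^ a := by ring
      have hge : (1:ℤ) ≤ 5 ^ a := one_le_pow₀ (by norm_num : (1:ℤ) ≤ 5)
      nlinarith [h5]
  refine ⟨b, fun _ => 12, ?_, ?_⟩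
  · intro j
    refine ⟨by norm_num, by norm_num, ?_⟩
    rintro ⟨e, he⟩
    have h3 : (3:ℕ) ∣ 2 ^ e := he ▸ (by norm_num)
    have := (Nat.Prime.dvd_of_dvd_pow (by norm_num : Nat.Prime 3) h3)
    norm_num at this
  · rw [heq2, ha1, pow_one]
    congr 1
    rw [Finset.prod_const, Finset.card_univ, Fintype.card_fin]
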